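/- Let m ≥ 2 be an integer and c a real constant with |c| ≤ m−1. Define A(s) = (∫₀^s (sinh t)^(m-1) dt)/(sinh s)^(m-1) for s > 0 and A(0) = 0, and define f : B^m → ℝ on the open unit ball B^m ⊂ ℝ^m by f(x) = ∫₀^{r(x)} c·A(s)/√(1 − c²·A(s)²) ds, where r(x) = log((1 + ‖x‖)/(1 − ‖x‖)). Then f is a C^∞ (infinitely differentiable) function on B^m. -/

import Mathlib

open intervalIntegral MeasureTheory Real Set

noncomputable def Jint (m k : ℕ) (u : ℝ) : ℝ :=
  ∫ ρ in (0:ℝ)..1, ρ ^ (m - 1 + 2*k) / (1 - u * ρ ^ 2) ^ (m + k)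

lemma denom_pos {u ρ : ℝ} (hu : u < 1) (hρ : ρ ^ 2 ≤ 1) : 0 < 1 - u * ρ ^ 2 := by
  rcases le_or_gt u 0 with h | h
  · nlinarith [sq_nonneg ρ]
  · nlinarith [sq_nonneg ρ]

lemma Jint_meas (m k : ℕ) (x : ℝ) :
    Measurable (fun ρ : ℝ => ρ ^ (m - 1 + 2*k) / (1 - x * ρ ^ 2) ^ (m + k)) :=
  (measurable_id.pow_const _).div
    ((measurable_const.sub (measurable_const.mul (measurable_id.pow_const 2))).pow_const _)

lemma Jint_contOn (m k : ℕ) {x : ℝ} (hx : x < 1) :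
    ContinuousOn (fun ρ : ℝ => ρ ^ (m - 1 + 2*k) / (1 - x * ρ ^ 2) ^ (m + k))
      (Icc (0:ℝ) 1) := by
  apply ContinuousOn.div (by fun_prop) (by fun_prop)
  intro ρ hρ
  have h2 : ρ ^ 2 ≤ 1 := by rcases hρ with ⟨h0, h1⟩; nlinarith
  exact pow_ne_zero _ (ne_of_gt (denom_pos hx h2))

lemma Jint_hasDerivAt (m k : ℕ) (hm : 2 ≤ m) {u : ℝ} (hu : u < 1) :
    HasDerivAt (Jint m k) (((m : ℝ) + k) * Jint m (k+1) u) u := by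
  set ε : ℝ := (1 - u)/2 with hε
  have hεpos : 0 < ε := by simp [hε]; linarith
  set δ : ℝ := min (1 - (u + ε)) 1 with hδ
  have hδpos : 0 < δ := by
    apply lt_min _ one_pos
    simp [hε]; linarith
  have hb : u + ε < 1 := by simp [hε]; linarith
  -- key positivity on the ball
  have key : ∀ x ∈ Metric.ball u ε, ∀ ρ ∈ Set.uIoc (0:ℝ) 1, δ ≤ 1 - x * ρ ^ 2 := by
    intro x hx ρ hρ
    rw [Set.uIoc_of_le zero_le_one] at hρ
    have hx' : x < u + ε := by
      have := Metric.mem_ball.mp hx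
      rw [Real.dist_eq, abs_lt] at this; linarith [this.2]
    have hρ2 : 0 < ρ ^ 2 ∧ ρ ^ 2 ≤ 1 := by constructor <;> nlinarith [hρ.1, hρ.2]
    rcases le_or_gt x 0 with h | h
    · have : 1 - x * ρ^2 ≥ 1 := by nlinarith [hρ2.1]
      calc δ ≤ 1 := min_le_right _ _
        _ ≤ _ := this
    · have : x * ρ^2 ≤ x := by nlinarith [hρ2.2]
      calc δ ≤ 1 - (u + ε) := min_le_left _ _
        _ ≤ 1 - x * ρ^2 := by linarith
  have main := intervalIntegral.hasDerivAt_integral_of_dominated_loc_of_deriv_le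
    (F := fun x ρ => ρ ^ (m - 1 + 2*k) / (1 - x * ρ ^ 2) ^ (m + k))
    (F' := fun x ρ => ((m:ℝ)+k) * (ρ ^ (m - 1 + 2*(k+1)) / (1 - x * ρ ^ 2) ^ (m + (k+1))))
    (bound := fun _ => ((m:ℝ)+k) * (1/δ^(m+k+1)))
    (μ := volume) (a := 0) (b := 1) (x₀ := u) (Metric.ball_mem_nhds u hεpos)
    (Filter.Eventually.of_forall fun x => (Jint_meas m k x).aestronglyMeasurable)
    (((Jint_contOn m k hu).mono (by rw [uIcc_of_le zero_le_one])).intervalIntegrable)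
    ((measurable_const.mul (Jint_meas m (k+1) u)).aestronglyMeasurable)
    ?_ (intervalIntegrable_const) ?_
  · have h1 : (fun x => ∫ ρ in (0:ℝ)..1, ρ ^ (m - 1 + 2*k) / (1 - x * ρ ^ 2) ^ (m + k))
        = Jint m k := rfl
    have h2 : (∫ ρ in (0:ℝ)..1, ((m:ℝ)+k) * (ρ ^ (m - 1 + 2*(k+1)) / (1 - u * ρ ^ 2) ^ (m + (k+1))))
        = ((m:ℝ)+k) * Jint m (k+1) u := intervalIntegral.integral_const_mul _ _
    rw [h1, h2] at main
    exact main.2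
  · -- bound
    apply Filter.Eventually.of_forall
    intro ρ hρ x hx
    have hd := key x hx ρ hρ
    rw [Set.uIoc_of_le zero_le_one] at hρ
    have hρ01 : 0 < ρ ∧ ρ ≤ 1 := ⟨hρ.1, hρ.2⟩
    have hρN : ρ ^ (m - 1 + 2*(k+1)) ≤ 1 := pow_le_one₀ hρ01.1.le hρ01.2
    have hρNpos : 0 < ρ ^ (m - 1 + 2*(k+1)) := pow_pos hρ01.1 _
    have hdpos : (0:ℝ) < 1 - x * ρ ^ 2 := lt_of_lt_of_le hδpos hd
    have hpow : δ ^ (m+k+1) ≤ (1 - x * ρ ^ 2) ^ (m+(k+1)) := by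
      have : m + (k+1) = m + k + 1 := by omega
      rw [this]
      exact pow_le_pow_left₀ hδpos.le hd _
    have hq : ρ ^ (m - 1 + 2*(k+1)) / (1 - x * ρ ^ 2) ^ (m + (k+1)) ≤ 1/δ^(m+k+1) :=
      div_le_div₀ (by norm_num) hρN (pow_pos hδpos _) hpow
    have hnn : 0 ≤ ρ ^ (m - 1 + 2*(k+1)) / (1 - x * ρ ^ 2) ^ (m + (k+1)) :=
      div_nonneg hρNpos.le (pow_nonneg hdpos.le _)
    rw [Real.norm_eq_abs, abs_mul, abs_of_nonneg hnn, abs_of_nonneg (by positivity : (0:ℝ) ≤ (m:ℝ)+k)]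
    exact mul_le_mul_of_nonneg_left hq (by positivity)
  · -- differentiability
    apply Filter.Eventually.of_forall
    intro ρ hρ x hx
    have hd := key x hx ρ hρ
    have hdpos : (0:ℝ) < 1 - x * ρ ^ 2 := lt_of_lt_of_le hδpos hd
    have hne : (1 - x * ρ ^ 2) ≠ 0 := ne_of_gt hdpos
    have hlin : HasDerivAt (fun y : ℝ => 1 - y * ρ ^ 2) (-ρ^2) x := by
      simpa using ((hasDerivAt_id x).mul_const (ρ^2)).const_sub 1
    have hpow : HasDerivAt (fun y : ℝ => (1 - y * ρ ^ 2) ^ (m+k))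
        ((↑(m+k):ℝ) * (1 - x * ρ ^ 2) ^ (m+k-1) * (-ρ^2)) x := by exact_mod_cast hlin.pow (m+k)
    have hdiv := (hasDerivAt_const x ((ρ:ℝ) ^ (m - 1 + 2*k))).div hpow (pow_ne_zero _ hne)
    refine HasDerivAt.congr_deriv hdiv ?_
    have e2m : 2*(m+k) = (m+k-1) + (m+(k+1)) := by omega
    have epow : ((1 - x * ρ ^ 2) ^ (m+k))^2 = (1 - x * ρ ^ 2) ^ (m+k-1) * (1 - x * ρ ^ 2) ^ (m+(k+1)) := by
      rw [← pow_mul, ← pow_add, ← e2m, mul_comm 2 (m+k)]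
    have eρ : ρ ^ (m - 1 + 2*(k+1)) = ρ ^ (m - 1 + 2*k) * ρ^2 := by
      have h : m - 1 + 2*(k+1) = (m-1+2*k)+2 := by omega
      rw [h, pow_add]
    simp only [epow, eρ]
    have h1 : (1 - x * ρ ^ 2) ^ (m+k-1) ≠ 0 := pow_ne_zero _ hne
    have h2 : (1 - x * ρ ^ 2) ^ (m+(k+1)) ≠ 0 := pow_ne_zero _ hne
    field_simp
    push_cast
    ring

lemma Jint_contDiffOn (m : ℕ) (hm : 2 ≤ m) (k : ℕ) :
    ContDiffOn ℝ (⊤ : ℕ∞) (Jint m k) (Set.Iio 1) := by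
  suffices h : ∀ n : ℕ, ∀ k, ContDiffOn ℝ n (Jint m k) (Set.Iio 1) by
    rw [contDiffOn_infty]
    exact fun n => h n k
  intro n
  induction n with
  | zero =>
    intro k
    rw [show ((0:ℕ) : WithTop ℕ∞) = 0 from rfl, contDiffOn_zero]
    exact fun u hu => ((Jint_hasDerivAt m k hm hu).differentiableAt.continuousAt).continuousWithinAt
  | succ n ih =>
    intro k
    rw [show ((n+1 : ℕ) : WithTop ℕ∞) = (n : WithTop ℕ∞) + 1 by push_cast; rfl,
      contDiffOn_succ_iff_deriv_of_isOpen isOpen_Iio]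
    refine ⟨fun u hu => (Jint_hasDerivAt m k hm hu).differentiableAt.differentiableWithinAt,
      by simp, ?_⟩
    exact ((contDiffOn_const.mul (ih (k+1)))).congr
      fun u hu => (Jint_hasDerivAt m k hm hu).deriv

noncomputable def Lf (τ : ℝ) : ℝ := Real.log ((1 + τ) / (1 - τ))

lemma Lf_zero : Lf 0 = 0 := by simp [Lf]

lemma Lf_hasDerivAt {τ : ℝ} (h1 : -1 < τ) (h2 : τ < 1) :
    HasDerivAt Lf (2 / (1 - τ^2)) τ := by
  have ha : HasDerivAt (fun y : ℝ => Real.log (1 + y)) (1/(1+τ)) τ := by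
    simpa using (((hasDerivAt_id τ).const_add 1).log
      (by intro h; simp only [id_eq] at h; linarith))
  have hb : HasDerivAt (fun y : ℝ => Real.log (1 - y)) (-1/(1-τ)) τ := by
    have := (((hasDerivAt_id τ).const_sub 1).log
      (by intro h; simp only [id_eq] at h; linarith))
    simpa using this
  have hsub := ha.sub hb
  have heq : Lf =ᶠ[nhds τ] fun y => Real.log (1 + y) - Real.log (1 - y) := by
    filter_upwards [Ioo_mem_nhds h1 h2] with y hy
    exact Real.log_div (by linarith [hy.1] : (1:ℝ) + y ≠ 0) (by linarith [hy.2] : (1:ℝ) - y ≠ 0)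
  have := hsub.congr_of_eventuallyEq heq
  refine this.congr_deriv ?_
  have hn1 : (1:ℝ) + τ ≠ 0 := by linarith
  have hn2 : (1:ℝ) - τ ≠ 0 := by linarith
  have hn3 : (1:ℝ) - τ^2 ≠ 0 := by nlinarith
  field_simp
  ring

lemma sinh_Lf {τ : ℝ} (h1 : -1 < τ) (h2 : τ < 1) :
    Real.sinh (Lf τ) = 2 * τ / (1 - τ^2) := by
  have hpos : 0 < (1 + τ) / (1 - τ) := by
    apply div_pos <;> linarith
  rw [Lf, Real.sinh_log hpos]
  have hn1 : (1:ℝ) + τ ≠ 0 := by linarith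
  have hn2 : (1:ℝ) - τ ≠ 0 := by linarith
  have hn3 : (1:ℝ) - τ^2 ≠ 0 := by nlinarith
  field_simp
  ring

lemma cosh_Lf {τ : ℝ} (h1 : -1 < τ) (h2 : τ < 1) :
    Real.cosh (Lf τ) = (1 + τ^2) / (1 - τ^2) := by
  have hpos : 0 < (1 + τ) / (1 - τ) := by
    apply div_pos <;> linarith
  rw [Lf, Real.cosh_log hpos]
  have hn1 : (1:ℝ) + τ ≠ 0 := by linarith
  have hn2 : (1:ℝ) - τ ≠ 0 := by linarith
  have hn3 : (1:ℝ) - τ^2 ≠ 0 := by nlinarith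
  field_simp
  ring

lemma Lf_pos {τ : ℝ} (h1 : 0 < τ) (h2 : τ < 1) : 0 < Lf τ := by
  apply Real.log_pos
  rw [lt_div_iff₀ (by linarith)]
  linarith

lemma tanh_half_Lf {τ : ℝ} (h1 : -1 < τ) (h2 : τ < 1) :
    Real.tanh (Lf τ / 2) = τ := by
  set x := Lf τ / 2 with hx
  have h2x : 2 * x = Lf τ := by rw [hx]; ring
  have hτ2 : (0:ℝ) < 1 - τ^2 := by nlinarith
  have hs : 2 * Real.sinh x * Real.cosh x = 2 * τ / (1 - τ^2) := by
    rw [← Real.sinh_two_mul, h2x, sinh_Lf h1 h2]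
  have hc2 : Real.cosh x ^ 2 + Real.sinh x ^ 2 = (1 + τ^2) / (1 - τ^2) := by
    rw [← Real.cosh_two_mul, h2x, cosh_Lf h1 h2]
  have hid : Real.cosh x ^ 2 - Real.sinh x ^ 2 = 1 := Real.cosh_sq_sub_sinh_sq x
  have hcpos : 0 < Real.cosh x := Real.cosh_pos x
  have hcc : Real.cosh x ^ 2 = 1 / (1 - τ^2) := by
    have h3 : (1+τ^2)/(1-τ^2) + 1 = 2/(1-τ^2) := by
      field_simp
      norm_num
    have h4 : 2/(1-τ^2) = 2*(1/(1-τ^2)) := by ring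
    linarith
  rw [Real.tanh_eq_sinh_div_cosh, div_eq_iff (ne_of_gt hcpos)]
  have h2' : 2 * Real.sinh x * Real.cosh x = 2 * τ * Real.cosh x ^ 2 := by
    rw [hcc, hs]; field_simp
  have := mul_right_cancel₀ (ne_of_gt hcpos)
    (show (2 * Real.sinh x) * Real.cosh x = (2 * τ * Real.cosh x) * Real.cosh x by
      rw [mul_assoc (2*τ)]; nlinarith [h2'])
  linarith

lemma sinh_ineq (m : ℕ) (hm : 2 ≤ m) {s : ℝ} (hs : 0 < s) :
    ((m:ℝ) - 1) * ∫ t in (0:ℝ)..s, Real.sinh t ^ (m-1) < Real.sinh s ^ (m-1) := by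
  set h : ℝ → ℝ := fun y => Real.sinh y ^ (m-1) - ((m:ℝ)-1) * ∫ t in (0:ℝ)..y, Real.sinh t ^ (m-1)
    with hh
  have hint : Continuous fun t : ℝ => Real.sinh t ^ (m-1) := by fun_prop
  have hder : ∀ y : ℝ, HasDerivAt h
      (((m:ℝ)-1) * Real.sinh y ^ (m-2) * Real.cosh y - ((m:ℝ)-1) * Real.sinh y ^ (m-1)) y := by
    intro y
    have h1 : HasDerivAt (fun y => Real.sinh y ^ (m-1))
        (((m-1 : ℕ):ℝ) * Real.sinh y ^ (m-1-1) * Real.cosh y) y :=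
      (Real.hasDerivAt_sinh y).pow (m-1)
    have h2 : HasDerivAt (fun y => ∫ t in (0:ℝ)..y, Real.sinh t ^ (m-1))
        (Real.sinh y ^ (m-1)) y :=
      intervalIntegral.integral_hasDerivAt_right (hint.intervalIntegrable _ _)
        (hint.stronglyMeasurableAtFilter _ _) hint.continuousAt
    have := h1.sub (h2.const_mul (((m:ℝ)-1)))
    have hc : ((m-1:ℕ):ℝ) = (m:ℝ) - 1 := by
      have : (1:ℕ) ≤ m := by omega
      push_cast [Nat.cast_sub this]; ring
    have he : m - 1 - 1 = m - 2 := by omega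
    rw [hc, he] at this
    exact this
  have hmono : StrictMonoOn h (Set.Ici 0) := by
    apply strictMonoOn_of_deriv_pos (convex_Ici 0)
    · exact fun y _ => ((hder y).differentiableAt.continuousAt).continuousWithinAt
    · intro y hy
      rw [interior_Ici] at hy
      rw [(hder y).deriv]
      have hsy : 0 < Real.sinh y := Real.sinh_pos_iff.mpr hy
      have hcs : Real.sinh y < Real.cosh y := by
        nlinarith [Real.cosh_sub_sinh y, Real.exp_pos (-y)]
      have hfac : Real.sinh y ^ (m-1) = Real.sinh y ^ (m-2) * Real.sinh y := by
        rw [← pow_succ]; congr 1; omega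
      rw [hfac]
      have hm1 : (0:ℝ) < (m:ℝ) - 1 := by
        have : (2:ℝ) ≤ m := by exact_mod_cast hm
        linarith
      have hp : (0:ℝ) < Real.sinh y ^ (m-2) := pow_pos hsy _
      nlinarith [mul_pos (mul_pos hm1 hp) (sub_pos.mpr hcs)]
  have h0 : h 0 = 0 := by
    simp [hh, Real.sinh_zero, zero_pow (by omega : m - 1 ≠ 0)]
  have := hmono (Set.self_mem_Ici) (Set.mem_Ici.mpr hs.le) hs
  rw [h0] at this
  simp only [hh] at this
  linarith

lemma intA (m : ℕ) (hm : 2 ≤ m) {τ : ℝ} (hτ0 : 0 ≤ τ) (hτ1 : τ < 1) :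
    ∫ t in (0:ℝ)..(Lf τ), Real.sinh t ^ (m-1)
      = 2^m * τ^m * Jint m 0 (τ^2) := by
  have huIcc : Set.uIcc (0:ℝ) τ = Set.Icc 0 τ := Set.uIcc_of_le hτ0
  have hsq : ∀ σ ∈ Set.Icc (0:ℝ) τ, (1 - σ^2) ≠ 0 := by
    intro σ hσ
    have : σ^2 < 1 := by nlinarith [hσ.1, hσ.2]
    nlinarith
  have hder : ∀ σ ∈ Set.uIcc (0:ℝ) τ, HasDerivAt Lf (2/(1-σ^2)) σ := by
    intro σ hσ
    rw [huIcc] at hσ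
    exact Lf_hasDerivAt (by linarith [hσ.1]) (by linarith [hσ.2])
  have hcont : ContinuousOn (fun σ : ℝ => 2/(1-σ^2)) (Set.uIcc (0:ℝ) τ) := by
    rw [huIcc]
    exact ContinuousOn.div continuousOn_const (by fun_prop) hsq
  -- step 1 : substitution t = Lf σ
  have step1 : (∫ σ in (0:ℝ)..τ, (2/(1-σ^2)) • Real.sinh (Lf σ) ^ (m-1))
      = ∫ t in (Lf 0)..(Lf τ), Real.sinh t ^ (m-1) := by
    have := intervalIntegral.integral_comp_smul_deriv (a := 0) (b := τ)
      (f := Lf) (f' := fun σ => 2/(1-σ^2)) (g := fun t => Real.sinh t ^ (m-1))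
      hder hcont (by fun_prop)
    simpa [Function.comp] using this
  rw [Lf_zero] at step1
  rw [← step1]
  -- step 2 : rewrite the integrand
  have step2 : (∫ σ in (0:ℝ)..τ, (2/(1-σ^2)) • Real.sinh (Lf σ) ^ (m-1))
      = ∫ σ in (0:ℝ)..τ, (fun σ : ℝ => (2/(1-σ^2)) * (2*σ/(1-σ^2))^(m-1)) σ := by
    apply intervalIntegral.integral_congr
    intro σ hσ
    rw [huIcc] at hσ
    simp only [smul_eq_mul]
    rw [sinh_Lf (by linarith [hσ.1]) (by linarith [hσ.2])]
  rw [step2]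
  -- step 3 : substitution σ = τ * ρ
  have hmono : ∀ ρ ∈ Set.uIcc (0:ℝ) 1, τ * ρ ∈ Set.Icc 0 τ := by
    intro ρ hρ
    rw [Set.uIcc_of_le zero_le_one] at hρ
    exact ⟨mul_nonneg hτ0 hρ.1, by nlinarith [hρ.1, hρ.2]⟩
  have contW : ContinuousOn (fun σ : ℝ => (2/(1-σ^2)) * (2*σ/(1-σ^2))^(m-1)) (Set.Icc 0 τ) := by
    exact (ContinuousOn.div continuousOn_const (by fun_prop) hsq).mul
      ((ContinuousOn.div (by fun_prop) (by fun_prop) hsq).pow _)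
  have step3 : (∫ ρ in (0:ℝ)..1, τ • ((fun σ : ℝ => (2/(1-σ^2)) * (2*σ/(1-σ^2))^(m-1)) (τ * ρ)))
      = ∫ σ in (τ*0)..(τ*1), (fun σ : ℝ => (2/(1-σ^2)) * (2*σ/(1-σ^2))^(m-1)) σ := by
    have := intervalIntegral.integral_comp_smul_deriv' (a := 0) (b := 1)
      (f := fun ρ : ℝ => τ * ρ) (f' := fun _ => τ)
      (g := fun σ : ℝ => (2/(1-σ^2)) * (2*σ/(1-σ^2))^(m-1))
      (fun ρ _ => by simpa using ((hasDerivAt_id ρ).const_mul τ)) continuousOn_const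
      (contW.mono (by
        intro y hy
        rcases hy with ⟨ρ, hρ, rfl⟩
        exact hmono ρ hρ))
    simpa [Function.comp] using this
  simp only [mul_zero, mul_one] at step3
  rw [← step3]
  -- step 4 : pointwise algebra
  have step4 : (∫ ρ in (0:ℝ)..1, τ • ((fun σ : ℝ => (2/(1-σ^2)) * (2*σ/(1-σ^2))^(m-1)) (τ * ρ)))
      = ∫ ρ in (0:ℝ)..1, 2^m * τ^m * (ρ^(m-1+2*0) / (1 - τ^2*ρ^2)^(m+0)) := by
    apply intervalIntegral.integral_congr
    intro ρ hρ
    rw [Set.uIcc_of_le zero_le_one] at hρ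
    simp only [smul_eq_mul]
    have hτρ : (τ*ρ)^2 = τ^2*ρ^2 := mul_pow τ ρ 2
    rw [hτρ]
    set D := 1 - τ^2*ρ^2 with hD
    have hm1 : m - 1 + 1 = m := by omega
    have e1 : (2*(τ*ρ)/D)^(m-1) = (2^(m-1) * (τ^(m-1) * ρ^(m-1)))/D^(m-1) := by
      rw [div_pow, mul_pow, mul_pow]
    have e2 : D * D^(m-1) = D^m := by
      conv_rhs => rw [← hm1]
      rw [pow_succ]; ring
    have e3 : (2:ℝ)^m = 2^(m-1) * 2 := by conv_lhs => rw [← hm1, pow_succ]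
    have e4 : τ^m = τ^(m-1) * τ := by conv_lhs => rw [← hm1, pow_succ]
    simp only [Nat.add_zero, Nat.mul_zero]
    rw [e1, div_mul_div_comm, mul_div_assoc', e2, e3, e4]
    ring
  rw [step4, intervalIntegral.integral_const_mul]
  rfl

noncomputable def psiF (m : ℕ) (u : ℝ) : ℝ := 2*(1-u)^(m-1) * Jint m 0 u

noncomputable def PF (m : ℕ) (c : ℝ) (u : ℝ) : ℝ := 1 - c^2*u*(psiF m u)^2

noncomputable def ThetaF (m : ℕ) (c : ℝ) (u : ℝ) : ℝ :=
  c * psiF m u / ((1-u) * Real.sqrt (PF m c u))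

noncomputable def XiF (m : ℕ) (c : ℝ) (v : ℝ) : ℝ := ∫ u in (0:ℝ)..v, ThetaF m c u

lemma psiF_contDiffOn (m : ℕ) (hm : 2 ≤ m) :
    ContDiffOn ℝ (⊤ : ℕ∞) (psiF m) (Set.Iio 1) := by
  apply ContDiffOn.mul _ (Jint_contDiffOn m hm 0)
  exact (contDiffOn_const.mul ((contDiff_const.sub contDiff_id).pow _).contDiffOn)

lemma PF_contDiffOn (m : ℕ) (hm : 2 ≤ m) (c : ℝ) :
    ContDiffOn ℝ (⊤ : ℕ∞) (PF m c) (Set.Iio 1) := by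
  apply ContDiffOn.sub contDiffOn_const
  exact (contDiffOn_const.mul contDiffOn_id).mul ((psiF_contDiffOn m hm).pow 2)

-- the key representation : for 0 < τ < 1,
-- (∫₀^{Lf τ} sinh^{m-1}) / sinh(Lf τ)^{m-1} = τ * psiF m (τ²)
lemma quot_rep (m : ℕ) (hm : 2 ≤ m) {τ : ℝ} (hτ0 : 0 < τ) (hτ1 : τ < 1) :
    (∫ t in (0:ℝ)..(Lf τ), Real.sinh t ^ (m-1)) / Real.sinh (Lf τ) ^ (m-1)
      = τ * psiF m (τ^2) := by
  rw [intA m hm hτ0.le hτ1, sinh_Lf (by linarith) hτ1]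
  have hτ2 : (0:ℝ) < 1 - τ^2 := by nlinarith
  have hne : (1:ℝ) - τ^2 ≠ 0 := ne_of_gt hτ2
  have hτne : τ ≠ 0 := ne_of_gt hτ0
  have hm1 : m - 1 + 1 = m := by omega
  have e3 : (2:ℝ)^m = 2^(m-1) * 2 := by conv_lhs => rw [← hm1, pow_succ]
  have e4 : τ^m = τ^(m-1) * τ := by conv_lhs => rw [← hm1, pow_succ]
  rw [div_pow, mul_pow, psiF, e3, e4, div_div_eq_mul_div, div_eq_iff (by positivity)]
  ring

lemma PF_pos (m : ℕ) (hm : 2 ≤ m) (c : ℝ) (hc : |c| ≤ (m : ℝ) - 1)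
    {u : ℝ} (hu : u < 1) : 0 < PF m c u := by
  rcases le_or_gt u 0 with h | h
  · have h1 : u * (c * psiF m u)^2 ≤ 0 :=
      mul_nonpos_of_nonpos_of_nonneg h (sq_nonneg _)
    have : c^2*u*(psiF m u)^2 = u * (c * psiF m u)^2 := by ring
    rw [PF, this]
    linarith
  · set τ := Real.sqrt u with hτ
    have hτ2 : τ^2 = u := Real.sq_sqrt h.le
    have hτ0 : 0 < τ := Real.sqrt_pos.mpr h
    have hτ1 : τ < 1 := by nlinarith
    have hrep := quot_rep m hm hτ0 hτ1
    have hLpos : 0 < Lf τ := Lf_pos hτ0 hτ1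
    have hden : (0:ℝ) < Real.sinh (Lf τ) ^ (m-1) :=
      pow_pos (Real.sinh_pos_iff.mpr hLpos) _
    have hnum : (0:ℝ) ≤ ∫ t in (0:ℝ)..(Lf τ), Real.sinh t ^ (m-1) := by
      apply intervalIntegral.integral_nonneg hLpos.le
      intro t ht
      exact pow_nonneg (Real.sinh_nonneg_iff.mpr ht.1) _
    have h1 : 0 ≤ τ * psiF m (τ^2) := hrep ▸ div_nonneg hnum hden.le
    have h2 : ((m:ℝ)-1) * (τ * psiF m (τ^2)) < 1 := by
      rw [← hrep, ← mul_div_assoc, div_lt_one hden]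
      exact sinh_ineq m hm hLpos
    have hcsq : c^2 ≤ ((m:ℝ)-1)^2 := by
      nlinarith [sq_abs c, abs_nonneg c]
    have hm1R : (0:ℝ) ≤ (m:ℝ) - 1 := by
      have : (2:ℝ) ≤ (m:ℝ) := by exact_mod_cast hm
      linarith
    rw [PF, ← hτ2]
    nlinarith [mul_nonneg hm1R h1, hcsq, sq_nonneg (τ * psiF m (τ^2)), h2, h1,
      mul_le_mul_of_nonneg_right hcsq (sq_nonneg (τ * psiF m (τ^2)))]

lemma ThetaF_contDiffOn (m : ℕ) (hm : 2 ≤ m) (c : ℝ) (hc : |c| ≤ (m : ℝ) - 1) :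
    ContDiffOn ℝ (⊤ : ℕ∞) (ThetaF m c) (Set.Iio 1) := by
  apply ContDiffOn.div (contDiffOn_const.mul (psiF_contDiffOn m hm))
  · apply ContDiffOn.mul (contDiffOn_const.sub contDiffOn_id)
    exact (PF_contDiffOn m hm c).sqrt (fun u hu => (PF_pos m hm c hc hu).ne')
  · intro u hu
    have h1 : (1:ℝ) - u ≠ 0 := by simp only [Set.mem_Iio] at hu; intro h; linarith
    have h2 : Real.sqrt (PF m c u) ≠ 0 :=
      (Real.sqrt_pos.mpr (PF_pos m hm c hc hu)).ne'
    exact mul_ne_zero h1 h2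

lemma XiF_hasDerivAt (m : ℕ) (hm : 2 ≤ m) (c : ℝ) (hc : |c| ≤ (m : ℝ) - 1)
    {v : ℝ} (hv : v < 1) : HasDerivAt (XiF m c) (ThetaF m c v) v := by
  have hΘ : ContinuousOn (ThetaF m c) (Set.Iio 1) :=
    (ThetaF_contDiffOn m hm c hc).continuousOn
  have hsub : Set.uIcc (0:ℝ) v ⊆ Set.Iio 1 := by
    intro y hy
    rcases Set.mem_uIcc.mp hy with ⟨_, h2⟩ | ⟨_, h2⟩ <;> simp only [Set.mem_Iio] <;> linarith
  apply intervalIntegral.integral_hasDerivAt_right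
  · exact (hΘ.mono hsub).intervalIntegrable
  · exact ContinuousOn.stronglyMeasurableAtFilter isOpen_Iio hΘ v hv
  · exact hΘ.continuousAt (Iio_mem_nhds hv)

lemma XiF_contDiffOn (m : ℕ) (hm : 2 ≤ m) (c : ℝ) (hc : |c| ≤ (m : ℝ) - 1) :
    ContDiffOn ℝ (⊤ : ℕ∞) (XiF m c) (Set.Iio 1) := by
  rw [show ((⊤:ℕ∞) : WithTop ℕ∞) = ((⊤:ℕ∞) : WithTop ℕ∞) + 1 by rfl]
  rw [contDiffOn_succ_iff_deriv_of_isOpen isOpen_Iio]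
  refine ⟨fun v hv => (XiF_hasDerivAt m hm c hc hv).differentiableAt.differentiableWithinAt,
    by simp, ?_⟩
  exact (ThetaF_contDiffOn m hm c hc).congr
    fun v hv => (XiF_hasDerivAt m hm c hc hv).deriv

lemma tanh_sq_lt_one (y : ℝ) : Real.tanh y ^ 2 < 1 := by
  have hc := Real.cosh_pos y
  have hid : Real.cosh y ^ 2 - Real.sinh y ^ 2 = 1 := Real.cosh_sq_sub_sinh_sq y
  rw [Real.tanh_eq_sinh_div_cosh, div_pow, div_lt_one (by positivity)]
  nlinarith

lemma tanh_pos {y : ℝ} (hy : 0 < y) : 0 < Real.tanh y := by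
  rw [Real.tanh_eq_sinh_div_cosh]
  exact div_pos (Real.sinh_pos_iff.mpr hy) (Real.cosh_pos y)

lemma Lf_tanh_half (s : ℝ) : Lf (Real.tanh (s/2)) = s := by
  set y := s/2 with hy
  have hc := Real.cosh_pos y
  have h1 : 1 + Real.tanh y = Real.exp y / Real.cosh y := by
    rw [Real.tanh_eq_sinh_div_cosh, ← Real.cosh_add_sinh]
    field_simp
  have h2 : 1 - Real.tanh y = Real.exp (-y) / Real.cosh y := by
    rw [Real.tanh_eq_sinh_div_cosh, ← Real.cosh_sub_sinh]
    field_simp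
  rw [Lf, h1, h2, div_div_div_comm, div_self hc.ne', div_one, ← Real.exp_sub]
  rw [show y - -y = s by rw [hy]; ring, Real.log_exp]

lemma Lf_nonneg {t : ℝ} (ht0 : 0 ≤ t) (ht1 : t < 1) : 0 ≤ Lf t := by
  apply Real.log_nonneg
  rw [le_div_iff₀ (by linarith)]
  linarith

lemma key_eq (m : ℕ) (hm : 2 ≤ m) (c : ℝ) (hc : |c| ≤ (m : ℝ) - 1)
    (A : ℝ → ℝ) (hA0 : A 0 = 0)
    (hA : ∀ s : ℝ, 0 < s → A s =
      (∫ t in (0:ℝ)..s, Real.sinh t ^ (m - 1)) / Real.sinh s ^ (m - 1))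
    {t : ℝ} (ht0 : 0 ≤ t) (ht1 : t < 1) :
    (∫ s in (0:ℝ)..(Lf t), c * A s / Real.sqrt (1 - c ^ 2 * A s ^ 2))
      = XiF m c (t^2) := by
  set ghat : ℝ → ℝ := fun s =>
    c * (Real.tanh (s/2) * psiF m (Real.tanh (s/2)^2))
      / Real.sqrt (PF m c (Real.tanh (s/2)^2)) with hghat
  have htanhR : Continuous Real.tanh := by
    rw [show Real.tanh = fun x => Real.sinh x / Real.cosh x from funext Real.tanh_eq_sinh_div_cosh]
    exact Real.continuous_sinh.div Real.continuous_cosh fun x => (Real.cosh_pos x).ne'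
  have htanhc : Continuous fun s : ℝ => Real.tanh (s/2) :=
    htanhR.comp (continuous_id.div_const 2)
  have htc : Continuous fun s : ℝ => Real.tanh (s/2)^2 := htanhc.pow 2
  have hmapsI : ∀ s : ℝ, Real.tanh (s/2)^2 ∈ Set.Iio (1:ℝ) := fun s => _root_.tanh_sq_lt_one _
  have hψcomp : Continuous fun s : ℝ => psiF m (Real.tanh (s/2)^2) :=
    (psiF_contDiffOn m hm).continuousOn.comp_continuous htc hmapsI
  have hPcomp : Continuous fun s : ℝ => PF m c (Real.tanh (s/2)^2) :=
    (PF_contDiffOn m hm c).continuousOn.comp_continuous htc hmapsI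
  have hPpos : ∀ s : ℝ, 0 < PF m c (Real.tanh (s/2)^2) :=
    fun s => PF_pos m hm c hc (hmapsI s)
  have hghatc : Continuous ghat := by
    apply Continuous.div
    · exact continuous_const.mul (htanhc.mul hψcomp)
    · exact Real.continuous_sqrt.comp hPcomp
    · intro s
      exact (Real.sqrt_pos.mpr (hPpos s)).ne'
  have hLt0 : 0 ≤ Lf t := Lf_nonneg ht0 ht1
  have huIcc : Set.uIcc (0:ℝ) (Lf t) = Set.Icc 0 (Lf t) := Set.uIcc_of_le hLt0
  -- replace A-integrand by ghat
  have step_congr : (∫ s in (0:ℝ)..(Lf t), c * A s / Real.sqrt (1 - c ^ 2 * A s ^ 2))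
      = ∫ s in (0:ℝ)..(Lf t), ghat s := by
    apply intervalIntegral.integral_congr
    intro s hs
    rw [huIcc] at hs
    show c * A s / Real.sqrt (1 - c ^ 2 * A s ^ 2) = ghat s
    rcases eq_or_lt_of_le hs.1 with h | h
    · rw [← h]
      simp [hA0, hghat, Real.tanh_zero]
    · set τ' := Real.tanh (s/2) with hτ'
      have hτ'0 : 0 < τ' := tanh_pos (by linarith)
      have hτ'sq : τ'^2 < 1 := _root_.tanh_sq_lt_one _
      have hτ'1 : τ' < 1 := by nlinarith
      have hLf : Lf τ' = s := Lf_tanh_half s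
      have hAs : A s = τ' * psiF m (τ'^2) := by
        rw [← hLf, hA _ (by rw [hLf]; exact h)]
        exact quot_rep m hm hτ'0 hτ'1
      rw [hAs, hghat]
      rw [show (1 - c^2*(τ' * psiF m (τ'^2))^2) = PF m c (τ'^2) by rw [PF]; ring]
  rw [step_congr]
  -- substitute s = Lf τ
  have hsq : ∀ σ ∈ Set.Icc (0:ℝ) t, (1 - σ^2) ≠ 0 := by
    intro σ hσ
    have : σ^2 < 1 := by nlinarith [hσ.1, hσ.2]
    nlinarith
  have huIcc2 : Set.uIcc (0:ℝ) t = Set.Icc 0 t := Set.uIcc_of_le ht0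
  have step_sub1 : (∫ τ in (0:ℝ)..t, (2/(1-τ^2)) • ghat (Lf τ))
      = ∫ s in (Lf 0)..(Lf t), ghat s := by
    have := intervalIntegral.integral_comp_smul_deriv (a := 0) (b := t)
      (f := Lf) (f' := fun σ => 2/(1-σ^2)) (g := ghat)
      (fun σ hσ => by
        rw [huIcc2] at hσ
        exact Lf_hasDerivAt (by linarith [hσ.1]) (by linarith [hσ.2]))
      (by
        rw [huIcc2]
        exact ContinuousOn.div continuousOn_const (by fun_prop) hsq)
      hghatc
    simpa only [Function.comp_def] using this
  rw [Lf_zero] at step_sub1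
  rw [← step_sub1]
  -- pointwise rewriting to ThetaF
  have step_pointwise : (∫ τ in (0:ℝ)..t, (2/(1-τ^2)) • ghat (Lf τ))
      = ∫ τ in (0:ℝ)..t, (2*τ) • ((fun u => ThetaF m c u) (τ^2)) := by
    apply intervalIntegral.integral_congr
    intro τ hτ
    rw [huIcc2] at hτ
    have h1 : -1 < τ := by linarith [hτ.1]
    have h2 : τ < 1 := by linarith [hτ.2]
    have htanh : Real.tanh (Lf τ / 2) = τ := tanh_half_Lf h1 h2
    simp only [smul_eq_mul, hghat, htanh, ThetaF]
    have hne : (1:ℝ) - τ^2 ≠ 0 := hsq τ hτ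
    have hsqrt : Real.sqrt (PF m c (τ^2)) ≠ 0 :=
      (Real.sqrt_pos.mpr (PF_pos m hm c hc (by nlinarith [hτ.1, hτ.2]))).ne'
    field_simp
  rw [step_pointwise]
  -- substitute u = τ²
  have step_sub2 : (∫ τ in (0:ℝ)..t, (2*τ) • ((fun u => ThetaF m c u) (τ^2)))
      = ∫ u in ((0:ℝ)^2)..(t^2), ThetaF m c u := by
    have := intervalIntegral.integral_comp_smul_deriv' (a := 0) (b := t)
      (f := fun τ : ℝ => τ^2) (f' := fun τ : ℝ => 2*τ) (g := ThetaF m c)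
      (fun τ _ => by simpa using hasDerivAt_pow 2 τ)
      (by fun_prop)
      ((ThetaF_contDiffOn m hm c hc).continuousOn.mono (by
        intro y hy
        rcases hy with ⟨τ, hτ, rfl⟩
        rw [huIcc2] at hτ
        simp only [Set.mem_Iio]
        nlinarith [hτ.1, hτ.2]))
    simpa [Function.comp] using this
  rw [step_sub2]
  norm_num [XiF]


/-- For `m ≥ 2` and `|c| ≤ m-1`, the function
`f x = ∫₀^{r(x)} c A s/√(1 - c²A s²) ds`, where
`A s = (∫₀^s (sinh t)^(m-1) dt)/(sinh s)^(m-1)` (with `A 0 = 0`) and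
`r(x) = log((1+‖x‖)/(1-‖x‖))`, is `C^∞` on the open unit ball of `ℝ^m`. -/
theorem stmt_15 (m : ℕ) (hm : 2 ≤ m) (c : ℝ) (hc : |c| ≤ (m : ℝ) - 1)
    (A : ℝ → ℝ) (hA0 : A 0 = 0)
    (hA : ∀ s : ℝ, 0 < s → A s =
      (∫ t in (0:ℝ)..s, Real.sinh t ^ (m - 1)) / Real.sinh s ^ (m - 1))
    (f : EuclideanSpace ℝ (Fin m) → ℝ)
    (hf : ∀ x : EuclideanSpace ℝ (Fin m), ‖x‖ < 1 →
      f x = ∫ s in (0:ℝ)..(Real.log ((1 + ‖x‖) / (1 - ‖x‖))),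
        c * A s / Real.sqrt (1 - c ^ 2 * A s ^ 2)) :
    ContDiffOn ℝ (⊤ : ℕ∞) f (Metric.ball 0 1) := by
  have hq : ContDiff ℝ (⊤:ℕ∞) (fun x : EuclideanSpace ℝ (Fin m) => ‖x‖^2) :=
    contDiff_norm_sq ℝ
  have hmaps : Set.MapsTo (fun x : EuclideanSpace ℝ (Fin m) => ‖x‖^2)
      (Metric.ball 0 1) (Set.Iio 1) := by
    intro x hx
    rw [mem_ball_zero_iff] at hx
    simp only [Set.mem_Iio]
    nlinarith [norm_nonneg x]
  have hcomp := (XiF_contDiffOn m hm c hc).comp hq.contDiffOn hmaps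
  apply hcomp.congr
  intro x hx
  rw [mem_ball_zero_iff] at hx
  rw [hf x hx]
  exact key_eq m hm c hc A hA0 hA (norm_nonneg x) hx
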